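/- For positive integers A ≥ B ≥ C ≥ 1 and 0 ≤ r ≤ A-2, the linear map U_r : R_r → R_{r+1} given by multiplication by x+y+z on R = ℤ[x,y,z]/(x^A,y^B,z^C) has Smith normal form consisting entirely of 1's; in particular its cokernel is a free ℤ-module of rank h(r+1)-h(r), where h(s) is the number of monomials of degree s nonzero in R. -/

import Mathlib

open Matrix

/-- The monomials `x^i y^j z^k` of total degree `s` that are nonzero in
`ℤ[x,y,z]/(x^A, y^B, z^C)`, i.e. triples with `i < A`, `j < B`, `k < C`, `i+j+k = s`. -/
def Mon (A B C s : ℕ) : Type :=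
  {v : Fin A × Fin B × Fin C // (v.1 : ℕ) + (v.2.1 : ℕ) + (v.2.2 : ℕ) = s}

instance (A B C s : ℕ) : Fintype (Mon A B C s) := by unfold Mon; infer_instance
instance (A B C s : ℕ) : DecidableEq (Mon A B C s) := by unfold Mon; infer_instance

/-- `h(s)`: the rank of the degree-`s` homogeneous component. -/
def hdim (A B C s : ℕ) : ℕ := Fintype.card (Mon A B C s)

/-- The matrix of multiplication by `x+y+z` from degree `r` to degree `r+1`,
in the monomial bases: the entry in row `w`, column `v` is `1` iff `v` divides `w`. -/
def Umat (A B C r : ℕ) : Matrix (Mon A B C (r+1)) (Mon A B C r) ℤ :=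
  Matrix.of fun w v =>
    if (v.1.1 : ℕ) ≤ (w.1.1 : ℕ) ∧ (v.1.2.1 : ℕ) ≤ (w.1.2.1 : ℕ) ∧
        (v.1.2.2 : ℕ) ≤ (w.1.2.2 : ℕ) then (1 : ℤ) else 0

/-! ### An explicit left inverse of `Umat` -/

/-- Auxiliary recursively defined family of integers used to build a left inverse
of `Umat`. -/
def gfun (B C rr j0 k0 j k : ℕ) : ℤ :=
  if h : rr ≤ j + k then 0
  else (if j = j0 ∧ k = k0 then 1 else 0)
       - (if j + 1 < B then gfun B C rr j0 k0 (j+1) k else 0)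
       - (if k + 1 < C then gfun B C rr j0 k0 j (k+1) else 0)
termination_by rr - (j + k)
decreasing_by all_goals omega

lemma gfun_rec (B C rr j0 k0 j k : ℕ) (h : j + k < rr) :
    gfun B C rr j0 k0 j k
      + (if j + 1 < B then gfun B C rr j0 k0 (j+1) k else 0)
      + (if k + 1 < C then gfun B C rr j0 k0 j (k+1) else 0)
      = if j = j0 ∧ k = k0 then 1 else 0 := by
  rw [gfun, dif_neg (by omega)]
  ring

/-- The left inverse matrix of `Umat`. -/
def Vmat (A B C r : ℕ) : Matrix (Mon A B C r) (Mon A B C (r+1)) ℤ :=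
  Matrix.of fun v w =>
    gfun B C (r+1) (v.1.2.1 : ℕ) (v.1.2.2 : ℕ) (w.1.2.1 : ℕ) (w.1.2.2 : ℕ)

lemma VU_eq_one (A B C r : ℕ) (hr : r + 2 ≤ A) :
    Vmat A B C r * Umat A B C r = 1 := by
  ext v u
  obtain ⟨⟨⟨vi, hvi⟩, ⟨vj, hvj⟩, ⟨vk, hvk⟩⟩, hv⟩ := v
  obtain ⟨⟨⟨ui, hui⟩, ⟨uj, huj⟩, ⟨uk, huk⟩⟩, hu⟩ := u
  simp only [Fin.val_mk] at hv hu
  erw [Matrix.mul_apply]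
  -- the three candidate divisible monomials of degree r+1
  have hAx : ui + 1 < A := by omega
  set c1 : ℤ := gfun B C (r+1) vj vk uj uk with hc1
  set c2 : ℤ := gfun B C (r+1) vj vk (uj+1) uk with hc2
  set c3 : ℤ := gfun B C (r+1) vj vk uj (uk+1) with hc3
  have key : ∀ w : Mon A B C (r+1),
      Vmat A B C r ⟨(⟨vi, hvi⟩, ⟨vj, hvj⟩, ⟨vk, hvk⟩), by simpa using hv⟩ w *
        Umat A B C r w ⟨(⟨ui, hui⟩, ⟨uj, huj⟩, ⟨uk, huk⟩), by simpa using hu⟩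
      = (if (w.1.1 : ℕ) = ui + 1 ∧ (w.1.2.1 : ℕ) = uj ∧ (w.1.2.2 : ℕ) = uk then c1 else 0)
        + (if (w.1.1 : ℕ) = ui ∧ (w.1.2.1 : ℕ) = uj + 1 ∧ (w.1.2.2 : ℕ) = uk then c2 else 0)
        + (if (w.1.1 : ℕ) = ui ∧ (w.1.2.1 : ℕ) = uj ∧ (w.1.2.2 : ℕ) = uk + 1 then c3 else 0) := by
    rintro ⟨⟨⟨wi, hwi⟩, ⟨wj, hwj⟩, ⟨wk, hwk⟩⟩, hw⟩
    simp only [Fin.val_mk] at hw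
    simp only [Vmat, Umat, Matrix.of_apply, Fin.val_mk, hc1, hc2, hc3, mul_ite, mul_one, mul_zero]
    erw [Matrix.of_apply, Matrix.of_apply]
    split_ifs <;> first
      | (exfalso; omega)
      | (exfalso; simp only [imp_iff_not_or] at *; omega)
      | simp_all
      | (simp_all; ring)
  rw [Finset.sum_congr rfl (fun w _ => key w)]
  rw [Finset.sum_add_distrib, Finset.sum_add_distrib]
  -- first sum
  have h1 : (∑ w : Mon A B C (r+1),
      if (w.1.1 : ℕ) = ui + 1 ∧ (w.1.2.1 : ℕ) = uj ∧ (w.1.2.2 : ℕ) = uk then c1 else 0) = c1 := by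
    let wx : Mon A B C (r+1) := ⟨(⟨ui+1, hAx⟩, ⟨uj, huj⟩, ⟨uk, huk⟩), by simp; omega⟩
    rw [Finset.sum_congr rfl (fun w _ => ?_), Finset.sum_ite_eq' Finset.univ wx (fun _ => c1)]
    · simp
    · refine if_congr ?_ rfl rfl
      obtain ⟨⟨⟨wi, hwi⟩, ⟨wj, hwj⟩, ⟨wk, hwk⟩⟩, hw⟩ := w
      constructor
      · rintro ⟨h1, h2, h3⟩
        apply Subtype.ext
        simp_all [Prod.ext_iff, Fin.ext_iff, wx]
      · intro h
        have := congrArg (fun z : Mon A B C (r+1) => ((z.1.1 : ℕ), (z.1.2.1 : ℕ), (z.1.2.2 : ℕ))) h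
        simp [wx] at this
        exact ⟨this.1, this.2.1, this.2.2⟩
  -- second sum
  have h2 : (∑ w : Mon A B C (r+1),
      if (w.1.1 : ℕ) = ui ∧ (w.1.2.1 : ℕ) = uj + 1 ∧ (w.1.2.2 : ℕ) = uk then c2 else 0)
      = if uj + 1 < B then c2 else 0 := by
    by_cases hB : uj + 1 < B
    · rw [if_pos hB]
      let wy : Mon A B C (r+1) := ⟨(⟨ui, hui⟩, ⟨uj+1, hB⟩, ⟨uk, huk⟩), by simp; omega⟩
      rw [Finset.sum_congr rfl (fun w _ => ?_), Finset.sum_ite_eq' Finset.univ wy (fun _ => c2)]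
      · simp
      · refine if_congr ?_ rfl rfl
        obtain ⟨⟨⟨wi, hwi⟩, ⟨wj, hwj⟩, ⟨wk, hwk⟩⟩, hw⟩ := w
        constructor
        · rintro ⟨h1', h2', h3'⟩
          apply Subtype.ext
          simp_all [Prod.ext_iff, Fin.ext_iff, wy]
        · intro h
          have := congrArg (fun z : Mon A B C (r+1) => ((z.1.1 : ℕ), (z.1.2.1 : ℕ), (z.1.2.2 : ℕ))) h
          simp [wy] at this
          exact ⟨this.1, this.2.1, this.2.2⟩
    · rw [if_neg hB]
      refine Finset.sum_eq_zero fun w _ => ?_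
      obtain ⟨⟨⟨wi, hwi⟩, ⟨wj, hwj⟩, ⟨wk, hwk⟩⟩, hw⟩ := w
      refine if_neg ?_
      simp only [Fin.val_mk]
      omega
  -- third sum
  have h3 : (∑ w : Mon A B C (r+1),
      if (w.1.1 : ℕ) = ui ∧ (w.1.2.1 : ℕ) = uj ∧ (w.1.2.2 : ℕ) = uk + 1 then c3 else 0)
      = if uk + 1 < C then c3 else 0 := by
    by_cases hCc : uk + 1 < C
    · rw [if_pos hCc]
      let wz : Mon A B C (r+1) := ⟨(⟨ui, hui⟩, ⟨uj, huj⟩, ⟨uk+1, hCc⟩), by simp; omega⟩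
      rw [Finset.sum_congr rfl (fun w _ => ?_), Finset.sum_ite_eq' Finset.univ wz (fun _ => c3)]
      · simp
      · refine if_congr ?_ rfl rfl
        obtain ⟨⟨⟨wi, hwi⟩, ⟨wj, hwj⟩, ⟨wk, hwk⟩⟩, hw⟩ := w
        constructor
        · rintro ⟨h1', h2', h3'⟩
          apply Subtype.ext
          simp_all [Prod.ext_iff, Fin.ext_iff, wz]
        · intro h
          have := congrArg (fun z : Mon A B C (r+1) => ((z.1.1 : ℕ), (z.1.2.1 : ℕ), (z.1.2.2 : ℕ))) h
          simp [wz] at this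
          exact ⟨this.1, this.2.1, this.2.2⟩
    · rw [if_neg hCc]
      refine Finset.sum_eq_zero fun w _ => ?_
      obtain ⟨⟨⟨wi, hwi⟩, ⟨wj, hwj⟩, ⟨wk, hwk⟩⟩, hw⟩ := w
      refine if_neg ?_
      simp only [Fin.val_mk]
      omega
  rw [h1, h2, h3]
  have hrec := gfun_rec B C (r+1) vj vk uj uk (by omega)
  rw [← hc1, ← hc2, ← hc3] at hrec
  rw [hrec]; erw [Matrix.one_apply]
  refine if_congr ?_ rfl rfl
  constructor
  · rintro ⟨h1', h2'⟩
    apply Subtype.ext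
    simp [Prod.ext_iff, Fin.ext_iff]
    omega
  · intro h
    have := congrArg (fun z : Mon A B C r => ((z.1.1 : ℕ), (z.1.2.1 : ℕ), (z.1.2.2 : ℕ))) h
    simp at this
    omega

/-! ### Abstract Smith-normal-form consequence of a left inverse -/

lemma abstract_snf {n N : Type} [Fintype n] [Fintype N] [DecidableEq n] [DecidableEq N]
    (U : Matrix N n ℤ) (V : Matrix n N ℤ) (hVU : V * U = 1) (e : n ↪ N) :
    (∃ (P : Matrix N N ℤ) (Q : Matrix n n ℤ),
        IsUnit P.det ∧ IsUnit Q.det ∧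
        P * U * Q = Matrix.of fun i j => if i = e j then (1 : ℤ) else 0) ∧
    Module.Free ℤ ((N → ℤ) ⧸ LinearMap.range U.mulVecLin) ∧
    Module.finrank ℤ ((N → ℤ) ⧸ LinearMap.range U.mulVecLin)
      = Fintype.card N - Fintype.card n := by
  classical
  set f := U.mulVecLin with hf
  set s := V.mulVecLin with hs
  have hsf : ∀ x, s (f x) = x := by
    intro x
    have h := congrArg Matrix.mulVecLin hVU
    rw [Matrix.mulVecLin_mul, Matrix.mulVecLin_one] at h
    exact DFunLike.congr_fun h x
  set R := LinearMap.range f with hR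
  haveI : Module.Finite ℤ ((N → ℤ) ⧸ R) :=
    Module.Finite.of_surjective R.mkQ (Submodule.mkQ_surjective R)
  haveI : NoZeroSMulDivisors ℤ ((N → ℤ) ⧸ R) := by
    refine ⟨fun {c x} hcx => ?_⟩
    by_cases hc : c = 0
    · exact Or.inl hc
    refine Or.inr ?_
    obtain ⟨y, rfl⟩ := Submodule.mkQ_surjective R x
    have h0 : R.mkQ (c • y) = 0 := by rw [_root_.map_smul]; exact hcx
    rw [Submodule.mkQ_apply, Submodule.Quotient.mk_eq_zero] at h0
    obtain ⟨a, ha⟩ := h0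
    have h2 : a = c • (s y) := by rw [← hsf a, ha, _root_.map_smul]
    have h3 : c • y = c • f (s y) := by rw [← ha, h2, _root_.map_smul]
    have h4 : y = f (s y) := smul_right_injective (N → ℤ) hc h3
    rw [Submodule.mkQ_apply, Submodule.Quotient.mk_eq_zero]
    exact ⟨s y, h4.symm⟩
  haveI hFree : Module.Free ℤ ((N → ℤ) ⧸ R) := Module.free_of_finite_type_torsion_free'
  set g0 : (N → ℤ) →ₗ[ℤ] (n → ℤ) × ((N → ℤ) ⧸ R) := LinearMap.prod s R.mkQ with hg0
  have hinj : Function.Injective g0 := by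
    intro x y hxy
    have h1 : s x = s y := congrArg Prod.fst hxy
    have h2 : R.mkQ x = R.mkQ y := congrArg Prod.snd hxy
    rw [Submodule.mkQ_apply, Submodule.mkQ_apply, Submodule.Quotient.eq] at h2
    obtain ⟨a, ha⟩ := h2
    have h3 : a = 0 := by rw [← hsf a, ha, _root_.map_sub, h1, sub_self]
    have h5 : x - y = 0 := by rw [← ha, h3, _root_.map_zero]
    exact sub_eq_zero.mp h5
  have hsurj : Function.Surjective g0 := by
    rintro ⟨a, x⟩
    obtain ⟨y, rfl⟩ := Submodule.mkQ_surjective R x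
    refine ⟨f a + (y - f (s y)), Prod.ext ?_ ?_⟩
    · show s (f a + (y - f (s y))) = a
      rw [_root_.map_add, _root_.map_sub, hsf a, hsf (s y)]
      abel
    · show R.mkQ (f a + (y - f (s y))) = R.mkQ y
      rw [Submodule.mkQ_apply, Submodule.mkQ_apply, Submodule.Quotient.eq]
      exact ⟨a - s y, by rw [_root_.map_sub]; abel⟩
  set Φ : (N → ℤ) ≃ₗ[ℤ] (n → ℤ) × ((N → ℤ) ⧸ R) :=
    LinearEquiv.ofBijective g0 ⟨hinj, hsurj⟩ with hΦ
  have hrank : Fintype.card N = Fintype.card n + Module.finrank ℤ ((N → ℤ) ⧸ R) := by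
    have h1 := Φ.finrank_eq
    rw [Module.finrank_prod, Module.finrank_pi, Module.finrank_pi] at h1
    exact h1
  set p : N → Prop := fun i => i ∈ Set.range e with hp
  have hcard_pe : Fintype.card {i // p i} = Fintype.card n :=
    (Fintype.card_congr (Equiv.ofInjective e e.injective)).symm
  have hcardK : Fintype.card {i // ¬ p i} = Module.finrank ℤ ((N → ℤ) ⧸ R) := by
    have h2 : Fintype.card {i // ¬ p i} = Fintype.card N - Fintype.card {i // p i} :=
      Fintype.card_subtype_compl p
    omega
  set b : Module.Basis {i // ¬ p i} ℤ ((N → ℤ) ⧸ R) :=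
    (Module.Free.chooseBasis ℤ _).reindex (Fintype.equivOfCardEq
      (by rw [← Module.finrank_eq_card_chooseBasisIndex]; exact hcardK.symm)) with hb
  set q : n ≃ {i // p i} := Equiv.ofInjective e e.injective with hq
  set σ : N ≃ (n ⊕ {i // ¬ p i}) :=
    ((Equiv.sumCongr q (Equiv.refl _)).trans (Equiv.sumCompl p)).symm with hσ
  set Θ : (N → ℤ) ≃ₗ[ℤ] (N → ℤ) :=
    Φ.trans ((LinearEquiv.prodCongr (LinearEquiv.refl ℤ (n → ℤ)) b.equivFun).trans
      (((LinearEquiv.sumArrowLequivProdArrow n {i // ¬ p i} ℤ ℤ).symm).trans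
        (LinearEquiv.funCongrLeft ℤ ℤ σ))) with hΘ
  set P := LinearMap.toMatrix' (Θ : (N → ℤ) →ₗ[ℤ] (N → ℤ)) with hP
  have hPdet : IsUnit P.det := by
    have hPP : P * LinearMap.toMatrix' (Θ.symm : (N → ℤ) →ₗ[ℤ] (N → ℤ)) = 1 := by
      rw [hP, ← LinearMap.toMatrix'_comp]
      have : (Θ : (N → ℤ) →ₗ[ℤ] (N → ℤ)) ∘ₗ (Θ.symm : (N → ℤ) →ₗ[ℤ] (N → ℤ))
          = LinearMap.id := by ext x; simp
      rw [this, LinearMap.toMatrix'_id]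
    have hd := congrArg Matrix.det hPP
    rw [Matrix.det_mul, Matrix.det_one] at hd
    exact IsUnit.of_mul_eq_one _ hd
  have hU : U = LinearMap.toMatrix' f := by
    rw [hf, ← Matrix.toLin'_apply', LinearMap.toMatrix'_toLin']
  have hPU : P * U = Matrix.of fun i j => if i = e j then (1 : ℤ) else 0 := by
    rw [hP, hU, ← LinearMap.toMatrix'_comp]
    ext i j
    rw [LinearMap.toMatrix'_apply]
    set δj : n → ℤ := fun j' => if j' = j then 1 else 0 with hδj
    have hstep1 : Φ (f δj) = (δj, 0) := by
      rw [hΦ]; erw [LinearEquiv.ofBijective_apply]; rw [hg0, LinearMap.prod_apply]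
      refine Prod.ext ?_ ?_
      · exact hsf δj
      · show R.mkQ (f δj) = 0
        rw [Submodule.mkQ_apply, Submodule.Quotient.mk_eq_zero]
        exact ⟨δj, rfl⟩
    have hstep : Θ (f δj) = fun i =>
        (LinearEquiv.sumArrowLequivProdArrow n {i // ¬ p i} ℤ ℤ).symm (δj, 0) (σ i) := by
      rw [hΘ]
      simp only [LinearEquiv.trans_apply, hstep1]
      have : (LinearEquiv.prodCongr (LinearEquiv.refl ℤ (n → ℤ)) b.equivFun) (δj, (0 : (N → ℤ) ⧸ R))
          = (δj, 0) := by
        simp [LinearEquiv.prodCongr_apply]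
      rw [this]
      rfl
    rw [show (Pi.single j 1 : n → ℤ) = δj from by ext j'; simp [hδj, Pi.single_apply]]
    show Θ (f δj) i = _
    rw [hstep]
    simp only [Matrix.of_apply]
    by_cases hi : p i
    · have hσi : σ i = Sum.inl (q.symm ⟨i, hi⟩) := by
        rw [hσ, Equiv.symm_trans_apply, Equiv.sumCompl_symm_apply_of_pos (p := p) (a := i) hi]
        simp
      rw [hσi, LinearEquiv.sumArrowLequivProdArrow_symm_apply_inl]
      rw [hδj]
      refine if_congr ?_ rfl rfl
      constructor
      · intro h
        have : e (q.symm ⟨i, hi⟩) = e j := congrArg e h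
        rwa [hq, Equiv.apply_ofInjective_symm e.injective ⟨i, hi⟩] at this
      · intro h
        apply e.injective
        rw [hq, Equiv.apply_ofInjective_symm e.injective ⟨i, hi⟩]
        exact h
    · have hσi : σ i = Sum.inr ⟨i, hi⟩ := by
        rw [hσ, Equiv.symm_trans_apply, Equiv.sumCompl_symm_apply_of_neg (p := p) (a := i) hi]
        simp
      rw [hσi, LinearEquiv.sumArrowLequivProdArrow_symm_apply_inr]
      rw [if_neg (by rintro rfl; exact hi ⟨j, rfl⟩)]
      rfl
  refine ⟨⟨P, 1, hPdet, by simp, by rw [Matrix.mul_one, hPU]⟩, hFree, ?_⟩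
  omega

lemma Mon.ext' {A B C s : ℕ} {u v : Mon A B C s}
    (h1 : (u.1.1 : ℕ) = (v.1.1 : ℕ)) (h2 : (u.1.2.1 : ℕ) = (v.1.2.1 : ℕ))
    (h3 : (u.1.2.2 : ℕ) = (v.1.2.2 : ℕ)) : u = v := by
  obtain ⟨⟨a, b, c⟩, hu⟩ := u
  obtain ⟨⟨a', b', c'⟩, hv⟩ := v
  exact Subtype.ext (Prod.ext_iff.mpr ⟨Fin.ext h1, Prod.ext_iff.mpr ⟨Fin.ext h2, Fin.ext h3⟩⟩)

/-- For `A ≥ B ≥ C ≥ 1` and `0 ≤ r ≤ A-2`, the Smith normal form of `U_r` consists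
entirely of `1`s; in particular the cokernel of `U_r` is free of rank `h(r+1) - h(r)`. -/
theorem stmt0 (A B C r : ℕ) (hC : 1 ≤ C) (hCB : C ≤ B) (hBA : B ≤ A)
    (hr : r + 2 ≤ A) :
    (∃ e : Mon A B C r ↪ Mon A B C (r+1),
      ∃ (P : Matrix (Mon A B C (r+1)) (Mon A B C (r+1)) ℤ)
        (Q : Matrix (Mon A B C r) (Mon A B C r) ℤ),
        IsUnit P.det ∧ IsUnit Q.det ∧
        P * Umat A B C r * Q = Matrix.of fun i j => if i = e j then (1 : ℤ) else 0) ∧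
    Module.Free ℤ
      ((Mon A B C (r+1) → ℤ) ⧸ LinearMap.range (Umat A B C r).mulVecLin) ∧
    Module.finrank ℤ
      ((Mon A B C (r+1) → ℤ) ⧸ LinearMap.range (Umat A B C r).mulVecLin)
      = hdim A B C (r+1) - hdim A B C r := by
  have he : Function.Injective (fun v : Mon A B C r =>
      (⟨(⟨(v.1.1 : ℕ) + 1, by have := v.2; have := v.1.1.isLt; omega⟩, v.1.2.1, v.1.2.2),
        by have := v.2
           show ((v.1.1 : ℕ) + 1) + (v.1.2.1 : ℕ) + (v.1.2.2 : ℕ) = r + 1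
           omega⟩ : Mon A B C (r+1))) := by
    intro a b hab
    have h1 : (a.1.1 : ℕ) + 1 = (b.1.1 : ℕ) + 1 :=
      congrArg (fun z : Mon A B C (r+1) => (z.1.1 : ℕ)) hab
    have h2 : (a.1.2.1 : ℕ) = (b.1.2.1 : ℕ) :=
      congrArg (fun z : Mon A B C (r+1) => (z.1.2.1 : ℕ)) hab
    have h3 : (a.1.2.2 : ℕ) = (b.1.2.2 : ℕ) :=
      congrArg (fun z : Mon A B C (r+1) => (z.1.2.2 : ℕ)) hab
    exact Mon.ext' (by omega) h2 h3
  let e : Mon A B C r ↪ Mon A B C (r+1) := ⟨_, he⟩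
  obtain ⟨hPQ, hfree, hrank⟩ :=
    abstract_snf (Umat A B C r) (Vmat A B C r) (VU_eq_one A B C r hr) e
  exact ⟨⟨e, hPQ⟩, hfree, by rw [hrank]; rfl⟩
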